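/- Let γ ∈ (0,1), R > 0, ε_v > 0, and set ε₀ = R/(1−γ). Let h ≥ 1 be a natural number such that γ^h ≤ ε_v(1−γ)/(2R). Define ε_b = γ^(h−1)/h and, for 0 ≤ i ≤ h−1, δ_i = ε_b/γ^(h−1−i). Suppose a sequence of nonnegative reals e₀, e₁, …, e_h satisfies e₀ ≤ ε₀ and e_{i+1} ≤ γ(ε₀·δ_i + e_i) for all 0 ≤ i ≤ h−1. Then e_h ≤ ε_v. -/

import Mathlib

/-- Abstract algebraic core of the planning error theorem for adaptive belief
discretization in POMDPs: with leaf error and Lipschitz bound `ε₀ = R/(1-γ)`,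
discretization radii `δ i = ε_b / γ^(h-1-i)` with `ε_b = γ^(h-1)/h`, and horizon
`h` satisfying `γ^h ≤ ε_v (1-γ) / (2R)`, the root error `e h` is at most `ε_v`. -/
theorem planning_error
    (γ R εv : ℝ) (hγ0 : 0 < γ) (hγ1 : γ < 1) (hR : 0 < R) (hεv : 0 < εv)
    (h : ℕ) (hh : 1 ≤ h)
    (hgh : γ ^ h ≤ εv * (1 - γ) / (2 * R))
    (e : ℕ → ℝ) (hepos : ∀ i, 0 ≤ e i)
    (he0 : e 0 ≤ R / (1 - γ))
    (hrec : ∀ i < h,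
      e (i + 1) ≤ γ * ((R / (1 - γ)) * ((γ ^ (h - 1) / (h : ℝ)) / γ ^ (h - 1 - i)) + e i)) :
    e h ≤ εv := by
  set ε₀ : ℝ := R / (1 - γ) with hε₀
  set εb : ℝ := γ ^ (h - 1) / (h : ℝ) with hεb
  have h1γ : 0 < 1 - γ := by linarith
  have hε₀pos : 0 < ε₀ := div_pos hR h1γ
  have key : ∀ i, i ≤ h → e i ≤ γ ^ i * ε₀ + (i : ℝ) * ε₀ * εb * γ / γ ^ (h - i) := by
    intro i
    induction i with
    | zero => intro _; simpa using he0
    | succ i ih =>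
      intro hih
      have hi : i < h := hih
      have ih' := ih (le_of_lt hi)
      have hrec' := hrec i hi
      have hpow : γ ^ (h - i) = γ ^ (h - 1 - i) * γ := by
        rw [← pow_succ]
        congr 1
        omega
      have hg : (0:ℝ) < γ ^ (h - 1 - i) := pow_pos hγ0 _
      have step : γ * (ε₀ * (εb / γ ^ (h - 1 - i)) + e i)
          ≤ γ ^ (i+1) * ε₀ + ((i:ℝ)+1) * ε₀ * εb * γ / γ ^ (h - (i+1)) := by
        have hbound : γ * (ε₀ * (εb / γ ^ (h - 1 - i)) + e i)
            ≤ γ * (ε₀ * (εb / γ ^ (h - 1 - i)) + (γ ^ i * ε₀ + (i : ℝ) * ε₀ * εb * γ / γ ^ (h - i))) := by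
          apply mul_le_mul_of_nonneg_left _ (le_of_lt hγ0)
          linarith
        refine hbound.trans (le_of_eq ?_)
        have hpow2 : h - (i+1) = h - 1 - i := by omega
        rw [hpow2, hpow]
        field_simp
        ring
      push_cast
      calc e (i+1) ≤ _ := hrec'
        _ ≤ _ := step
  have final := key h le_rfl
  simp only [Nat.sub_self, pow_zero, div_one] at final
  have hhc : (h : ℝ) ≠ 0 := Nat.cast_ne_zero.mpr (by omega)
  have heb : (h : ℝ) * ε₀ * εb * γ = γ ^ h * ε₀ := by
    rw [hεb]
    have : γ ^ (h-1) * γ = γ ^ h := by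
      rw [← pow_succ]; congr 1; omega
    field_simp
    exact this
  rw [heb] at final
  have h2 : 2 * (γ ^ h * ε₀) ≤ εv := by
    rw [hε₀]
    calc 2 * (γ ^ h * (R / (1-γ))) = γ ^ h * (2 * R) / (1-γ) := by ring
      _ ≤ εv := by
        rw [div_le_iff₀ h1γ]
        calc γ ^ h * (2*R) ≤ εv * (1-γ) / (2*R) * (2*R) := by
              apply mul_le_mul_of_nonneg_right hgh (by positivity)
          _ = εv * (1-γ) := by field_simp
  linarith
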